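/- arXiv:2107.11533 — 2 statements merged into one kernel-verified Lean document; each statement's English description precedes it below -/
import Mathlib

section
/- The bias of the IPS estimator equals the negative expected reward mass on unsupported actions: E_S[R̂_IPS(π)] − R(π) = E_x[−∑_{a ∈ U(x,μ)} π(a|x) δ(x,a)], where U(x,μ) = {a : μ(a|x) = 0} and δ(x,a) = E[r | x,a]. -/
open MeasureTheory Finset
open scoped Classical

/-- Bias of IPS under deficient support: the expectation of the IPS estimator
(`E_S[R̂_IPS(π)] = E_x ∑_a μ(a|x)·(π(a|x)/μ(a|x))·δ(x,a)`, with the convention that the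
ratio is `0` when `μ(a|x) = 0`) minus the policy value `R(π) = E_x ∑_a π(a|x) δ(x,a)`
equals `E_x[−∑_{a ∈ U(x,μ)} π(a|x) δ(x,a)]`, where `U(x,μ) = {a : μ(a|x) = 0}`. -/
theorem stmt0 {X : Type*} [MeasurableSpace X] {A : Type*} [Fintype A]
    (Px : Measure X) [IsProbabilityMeasure Px]
    (μ π : X → A → ℝ) (δ : X → A → ℝ)
    (hμ : ∀ x a, 0 ≤ μ x a) (hπ : ∀ x a, 0 ≤ π x a)
    (h1 : Integrable (fun x => ∑ a, μ x a * (π x a / μ x a * δ x a)) Px)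
    (h2 : Integrable (fun x => ∑ a, π x a * δ x a) Px) :
    (∫ x, ∑ a, μ x a * (π x a / μ x a * δ x a) ∂Px) - (∫ x, ∑ a, π x a * δ x a ∂Px)
      = ∫ x, -∑ a ∈ univ.filter (fun a => μ x a = 0), π x a * δ x a ∂Px := by
  rw [← integral_sub h1 h2]
  congr 1
  funext x
  have : ∀ a : A, μ x a * (π x a / μ x a * δ x a)
      = π x a * δ x a - (if μ x a = 0 then π x a * δ x a else 0) := by
    intro a
    by_cases h : μ x a = 0
    · simp [h]
    · rw [if_neg h, sub_zero]; field_simp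
  simp only [this, Finset.sum_sub_distrib]
  rw [Finset.sum_ite, Finset.sum_const_zero, add_zero]
  ring
end

section
/- For a sequence x_1, x_2, ... in R^d with ‖x_t‖ ≤ S for all t, and V_t = V + ∑_{i=1}^t x_i x_iᵀ for a positive definite matrix V, one has ∑_{i=1}^t min(‖x_i‖²_{V_{i-1}^{-1}}, 1) ≤ 2 log(det(V_t)/det(V)) ≤ 2d log((trace(V) + t S²)/d) − 2 log(det(V)). -/
open Matrix Finset

lemma myVecMulVec_posSemidef {d : ℕ} (v : Fin d → ℝ) : (vecMulVec v v).PosSemidef := by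
  rw [posSemidef_iff_dotProduct_mulVec]
  constructor
  · ext i j
    simp [conjTranspose_apply, vecMulVec_apply, mul_comm]
  · intro y
    have h : (vecMulVec v v) *ᵥ y = (v ⬝ᵥ y) • v := by
      ext i
      simp only [mulVec, vecMulVec_apply, dotProduct, Finset.mul_sum, Pi.smul_apply,
        smul_eq_mul, Finset.sum_mul]
      exact Finset.sum_congr rfl fun j _ => by ring
    rw [h]
    simp only [star_trivial, dotProduct_smul, smul_eq_mul]
    rw [dotProduct_comm y v]
    exact mul_self_nonneg _

lemma myMinLog {u : ℝ} (hu : 0 ≤ u) : min u 1 ≤ 2 * Real.log (1 + u) := by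
  have h1 : (0:ℝ) < 1 + u := by linarith
  have hlog : 1 - (1 + u)⁻¹ ≤ Real.log (1 + u) := by
    have h := Real.log_le_sub_one_of_pos (x := (1 + u)⁻¹) (by positivity)
    rw [Real.log_inv] at h
    linarith
  have hinv : (1 + u)⁻¹ * (1 + u) = 1 := inv_mul_cancel₀ h1.ne'
  rcases le_total u 1 with h | h
  · rw [min_eq_left h]
    nlinarith [mul_le_mul_of_nonneg_right hlog h1.le]
  · rw [min_eq_right h]
    have h2 : Real.log 2 ≤ Real.log (1 + u) := Real.log_le_log (by norm_num) (by linarith)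
    nlinarith [Real.log_two_gt_d9]

lemma myDetStep {d : ℕ} {A : Matrix (Fin d) (Fin d) ℝ} (hA : A.PosDef) (v : Fin d → ℝ) :
    (A + vecMulVec v v).det = A.det * (1 + v ⬝ᵥ A⁻¹ *ᵥ v) := by
  rw [vecMulVec_eq Unit, det_add_replicateCol_mul_replicateRow hA.det_pos.ne'.isUnit v v]
  congr 1
  rw [det_unique, Matrix.add_apply, Matrix.one_apply_eq]
  congr 1
  simp only [Matrix.mul_apply, Matrix.replicateRow_apply, Matrix.replicateCol_apply, dotProduct, mulVec,
    Finset.sum_mul, Finset.mul_sum]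
  rw [Finset.sum_comm]
  apply Finset.sum_congr rfl
  intro i _
  apply Finset.sum_congr rfl
  intro j _
  ring

lemma myTraceEig {d : ℕ} {A : Matrix (Fin d) (Fin d) ℝ} (hA : A.IsHermitian) :
    A.trace = ∑ i, hA.eigenvalues i := by
  nth_rewrite 1 [hA.spectral_theorem]
  rw [Unitary.conjStarAlgAut_apply, trace_mul_cycle, Unitary.coe_star_mul_self, Matrix.one_mul,
    trace_diagonal]
  simp

lemma myDetLePow {d : ℕ} (hd : 0 < d) {A : Matrix (Fin d) (Fin d) ℝ} (hA : A.PosDef) :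
    A.det ≤ (A.trace / d) ^ d := by
  have hH := hA.isHermitian
  have hev : ∀ i, 0 < hH.eigenvalues i := fun i => hA.eigenvalues_pos i
  have hdet : A.det = ∏ i, hH.eigenvalues i := by
    rw [hH.det_eq_prod_eigenvalues]; norm_num
  have htr : A.trace = ∑ i, hH.eigenvalues i := myTraceEig hH
  have hd' : (0:ℝ) < d := by exact_mod_cast hd
  have hAM := Real.geom_mean_le_arith_mean_weighted univ (fun _ => (d:ℝ)⁻¹) hH.eigenvalues
    (fun _ _ => by positivity)
    (by simp [Finset.card_univ]; field_simp)
    (fun i _ => (hev i).le)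
  rw [Real.finset_prod_rpow univ _ (fun i _ => (hev i).le)] at hAM
  have hsum : ∑ i : Fin d, (d:ℝ)⁻¹ * hH.eigenvalues i = A.trace / d := by
    rw [htr, ← Finset.mul_sum]; ring
  rw [hsum] at hAM
  have hP : (0:ℝ) < ∏ i, hH.eigenvalues i := Finset.prod_pos (fun i _ => hev i)
  have key : ((∏ i, hH.eigenvalues i) ^ ((d:ℝ)⁻¹)) ^ d ≤ (A.trace / d) ^ d :=
    pow_le_pow_left₀ (Real.rpow_nonneg hP.le _) hAM d
  rwa [← Real.rpow_natCast ((∏ i, hH.eigenvalues i) ^ ((d:ℝ)⁻¹)) d, ← Real.rpow_mul hP.le,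
    inv_mul_cancel₀ hd'.ne', Real.rpow_one, ← hdet] at key

/-- Elliptical potential lemma: for `‖x_i‖ ≤ S` and `V_t = V + ∑_{i=1}^t x_i x_iᵀ` with
`V` positive definite,
`∑_{i=1}^t min(‖x_i‖²_{V_{i-1}⁻¹}, 1) ≤ 2 log(det V_t / det V)
  ≤ 2d log((trace V + t S²)/d) − 2 log det V`. -/
theorem stmt2 {d : ℕ} (V : Matrix (Fin d) (Fin d) ℝ) (hV : V.PosDef)
    (x : ℕ → Fin d → ℝ) (S : ℝ) (hx : ∀ i, Real.sqrt (x i ⬝ᵥ x i) ≤ S) (t : ℕ) :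
    (∑ i ∈ range t,
        min (x i ⬝ᵥ ((V + ∑ j ∈ range i, vecMulVec (x j) (x j))⁻¹).mulVec (x i)) 1)
      ≤ 2 * Real.log ((V + ∑ j ∈ range t, vecMulVec (x j) (x j)).det / V.det) ∧
    2 * Real.log ((V + ∑ j ∈ range t, vecMulVec (x j) (x j)).det / V.det)
      ≤ 2 * d * Real.log ((V.trace + t * S ^ 2) / d) - 2 * Real.log V.det := by
  set W : ℕ → Matrix (Fin d) (Fin d) ℝ :=
    fun i => V + ∑ j ∈ range i, vecMulVec (x j) (x j) with hWdef
  have hW : ∀ i, (W i).PosDef := by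
    intro i
    apply hV.add_posSemidef
    clear_value W
    induction i with
    | zero => simpa using (Matrix.PosSemidef.zero :
        (0 : Matrix (Fin d) (Fin d) ℝ).PosSemidef)
    | succ n ih =>
      rw [sum_range_succ]
      exact ih.add (myVecMulVec_posSemidef (x n))
  have hdet : ∀ i, 0 < (W i).det := fun i => (hW i).det_pos
  have hu : ∀ i, 0 ≤ x i ⬝ᵥ (W i)⁻¹ *ᵥ x i := by
    intro i
    have h := ((hW i).inv).posSemidef.re_dotProduct_nonneg (x i)
    simpa using h
  have hstep : ∀ i, (W (i + 1)).det = (W i).det * (1 + x i ⬝ᵥ (W i)⁻¹ *ᵥ x i) := by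
    intro i
    have h : W (i + 1) = W i + vecMulVec (x i) (x i) := by
      simp only [hWdef, sum_range_succ, add_assoc]
    rw [h, myDetStep (hW i)]
  have part1 : ∀ n : ℕ, (∑ i ∈ range n, min (x i ⬝ᵥ ((W i)⁻¹).mulVec (x i)) 1)
      ≤ 2 * Real.log ((W n).det / V.det) := by
    intro n
    induction n with
    | zero => simp [hWdef, div_self hV.det_pos.ne']
    | succ n ih =>
      rw [sum_range_succ]
      have h1u : (0:ℝ) < 1 + x n ⬝ᵥ (W n)⁻¹ *ᵥ x n := by linarith [hu n]
      have hlog : Real.log ((W (n + 1)).det / V.det)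
          = Real.log ((W n).det / V.det) + Real.log (1 + x n ⬝ᵥ (W n)⁻¹ *ᵥ x n) := by
        rw [hstep n, mul_div_right_comm, Real.log_mul (div_pos (hdet n) hV.det_pos).ne' h1u.ne']
      have hmin := myMinLog (hu n)
      rw [hlog]
      linarith
  have hSnn : 0 ≤ S := le_trans (Real.sqrt_nonneg _) (hx 0)
  refine ⟨part1 t, ?_⟩
  rcases Nat.eq_zero_or_pos d with hd | hd
  · subst hd
    simp [Matrix.det_isEmpty]
  · have hd' : (0:ℝ) < d := by exact_mod_cast hd
    have hxx : ∀ i, x i ⬝ᵥ x i ≤ S ^ 2 := by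
      intro i
      have h0 : 0 ≤ x i ⬝ᵥ x i := by
        simpa [dotProduct] using Finset.sum_nonneg fun j (_ : j ∈ univ) => mul_self_nonneg (x i j)
      nlinarith [Real.sq_sqrt h0, hx i, Real.sqrt_nonneg (x i ⬝ᵥ x i)]
    have htrv : ∀ j, (vecMulVec (x j) (x j)).trace = x j ⬝ᵥ x j := by
      intro j
      simp [Matrix.trace, Matrix.diag, vecMulVec_apply, dotProduct]
    have htrpos : 0 < (W t).trace := by
      rw [myTraceEig (hW t).isHermitian]
      exact Finset.sum_pos (fun i _ => (hW t).eigenvalues_pos i)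
        (univ_nonempty_iff.mpr ⟨⟨0, hd⟩⟩)
    have htr : (W t).trace ≤ V.trace + t * S ^ 2 := by
      rw [hWdef]
      simp only [trace_add, trace_sum]
      have : ∑ j ∈ range t, (vecMulVec (x j) (x j)).trace ≤ ∑ j ∈ range t, S ^ 2 :=
        Finset.sum_le_sum fun j _ => (htrv j).trans_le (hxx j)
      simp only [Finset.sum_const, card_range, nsmul_eq_mul] at this
      linarith
    have hT : (0:ℝ) < V.trace + t * S ^ 2 := lt_of_lt_of_le htrpos htr
    have hdetle : (W t).det ≤ ((V.trace + t * S ^ 2) / d) ^ d := by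
      refine (myDetLePow hd (hW t)).trans ?_
      exact pow_le_pow_left₀ (div_nonneg htrpos.le hd'.le) (by gcongr) d
    have hlogle : Real.log (W t).det ≤ d * Real.log ((V.trace + t * S ^ 2) / d) := by
      calc Real.log (W t).det ≤ Real.log (((V.trace + t * S ^ 2) / d) ^ d) :=
            Real.log_le_log (hdet t) hdetle
        _ = d * Real.log ((V.trace + t * S ^ 2) / d) := Real.log_pow _ _
    rw [Real.log_div (hdet t).ne' hV.det_pos.ne']
    linarith
end
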